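/- Let ν > 0, β > 0, t > 0, j ≥ k ≥ 0 integers, and λ_−(ξ) the smaller real root of z² + ν|ξ|²z + β²|ξ|² = 0 for |ξ| ≥ 2β/ν. Then there exist constants C, c₁, c₂ > 0 such that |λ_−(ξ)|^j e^{λ_−(ξ)t} (1+|ξ|²)^{−k} ≤ C t^{−(j−k)} e^{−c₁ t − c₂|ξ|² t} for all |ξ| ≥ 2β/ν. -/

import Mathlib

set_option maxHeartbeats 1600000 in
theorem high_frequency_symbol_bound (ν β t : ℝ) (j k : ℕ)
    (hν : 0 < ν) (hβ : 0 < β) (ht : 0 < t) (hjk : k ≤ j) :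
    ∃ C > 0, ∃ c₁ > 0, ∃ c₂ > 0,
      ∀ ξ : EuclideanSpace ℝ (Fin 3), 2 * β / ν ≤ ‖ξ‖ →
        |(-(ν * ‖ξ‖^2) - Real.sqrt (ν^2 * ‖ξ‖^4 - 4 * β^2 * ‖ξ‖^2)) / 2| ^ j *
            Real.exp ((-(ν * ‖ξ‖^2) - Real.sqrt (ν^2 * ‖ξ‖^4 - 4 * β^2 * ‖ξ‖^2)) / 2 * t) *
            ((1 + ‖ξ‖^2) ^ k)⁻¹ ≤
          C * t ^ ((k:ℝ) - (j:ℝ)) * Real.exp (-c₁ * t - c₂ * ‖ξ‖^2 * t) := by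
  obtain ⟨m, hmjk⟩ : ∃ m, j = k + m := ⟨j - k, (Nat.add_sub_cancel' hjk).symm⟩
  refine ⟨ν^j * (8/ν)^m * m.factorial, by positivity, β^2/ν, by positivity, ν/8,
    by positivity, ?_⟩
  intro ξ hξ
  set r := ‖ξ‖ with hr_def
  have hr : 0 < r := lt_of_lt_of_le (by positivity) hξ
  have hrpos : (0:ℝ) < r^2 := pow_pos hr 2
  have hr2 : 4*β^2/ν^2 ≤ r^2 := by
    have h := mul_self_le_mul_self (by positivity) hξ
    calc 4*β^2/ν^2 = (2*β/ν)*(2*β/ν) := by field_simp; ring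
    _ ≤ r*r := h
    _ = r^2 := (sq r).symm
  have hr2' : 4*β^2 ≤ ν^2 * r^2 := by
    have := mul_le_mul_of_nonneg_left hr2 (by positivity : (0:ℝ) ≤ ν^2)
    calc 4*β^2 = ν^2 * (4*β^2/ν^2) := by field_simp
    _ ≤ ν^2 * r^2 := this
  have hdisc : 0 ≤ ν^2*r^4 - 4*β^2*r^2 := by nlinarith [sq_nonneg r]
  set s := Real.sqrt (ν ^ 2 * r ^ 4 - 4 * β ^ 2 * r ^ 2) with hs_def
  have hs0 : 0 ≤ s := Real.sqrt_nonneg _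
  have hs1 : s ≤ ν*r^2 := by
    rw [hs_def]
    calc Real.sqrt (ν ^ 2 * r ^ 4 - 4 * β ^ 2 * r ^ 2) ≤ Real.sqrt ((ν*r^2)^2) :=
      Real.sqrt_le_sqrt (by nlinarith [sq_nonneg r])
    _ = ν*r^2 := Real.sqrt_sq (by positivity)
  set L := (-(ν * r ^ 2) - s) / 2 with hL_def
  have hLneg : L ≤ 0 := by rw [hL_def]; nlinarith
  have habs : |L| ≤ ν * r^2 := by
    rw [abs_of_nonpos hLneg, hL_def]; nlinarith
  have hLle : L * t ≤ -(ν * r^2 / 2) * t := by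
    apply mul_le_mul_of_nonneg_right _ ht.le
    rw [hL_def]; nlinarith
  have hinv : ((1 + r^2)^k)⁻¹ ≤ ((r^2)^k)⁻¹ := by
    apply inv_anti₀ (pow_pos hrpos k)
    exact pow_le_pow_left₀ (by positivity) (by nlinarith) k
  have step1 : |L| ^ j * Real.exp (L * t) * ((1 + r^2)^k)⁻¹ ≤
      (ν * r^2) ^ j * Real.exp (-(ν * r^2 / 2) * t) * ((r^2)^k)⁻¹ := by
    have h1 : |L| ^ j ≤ (ν * r^2) ^ j := pow_le_pow_left₀ (abs_nonneg _) habs j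
    have h2 : Real.exp (L * t) ≤ Real.exp (-(ν * r^2 / 2) * t) := Real.exp_le_exp.2 hLle
    exact mul_le_mul (mul_le_mul h1 h2 (Real.exp_pos _).le (by positivity)) hinv
      (by positivity) (by positivity)
  refine step1.trans ?_
  -- key pointwise bound
  set a := ν * r^2 * t / 8 with ha_def
  have ha : 0 < a := by positivity
  have hkey : a ^ m ≤ m.factorial * Real.exp a := by
    have := Real.pow_div_factorial_le_exp a ha.le m
    have hf : (0:ℝ) < m.factorial := by exact_mod_cast m.factorial_pos
    calc a ^ m = m.factorial * (a ^ m / m.factorial) := by field_simp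
    _ ≤ m.factorial * Real.exp a := by
        exact mul_le_mul_of_nonneg_left this hf.le
  -- r^2 ^ m ≤ (8/(ν t))^m * m! * exp a
  have hr2m : (r^2) ^ m * Real.exp (-a) ≤ (8/ν)^m * (t^m)⁻¹ * m.factorial := by
    have hrw : (r^2) ^ m = (8/ν)^m * (t^m)⁻¹ * a ^ m := by
      rw [ha_def, div_pow, div_pow, mul_pow, mul_pow]
      field_simp
    rw [hrw]
    have : a ^ m * Real.exp (-a) ≤ m.factorial := by
      have h := mul_le_mul_of_nonneg_right hkey (Real.exp_pos (-a)).le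
      rwa [mul_assoc, ← Real.exp_add, add_neg_cancel, Real.exp_zero, mul_one] at h
    calc (8/ν)^m * (t^m)⁻¹ * a^m * Real.exp (-a) = (8/ν)^m * (t^m)⁻¹ * (a^m * Real.exp (-a)) := by ring
    _ ≤ (8/ν)^m * (t^m)⁻¹ * m.factorial := by
        gcongr
  have hexp2 : Real.exp (-(2*a)) ≤ Real.exp (-(β^2/ν) * t) := by
    apply Real.exp_le_exp.2
    have hq : β^2/ν ≤ ν * r^2 / 4 := by
      rw [div_le_div_iff₀ hν (by norm_num : (0:ℝ) < 4)]
      nlinarith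
    have hq' := mul_le_mul_of_nonneg_right hq ht.le
    rw [ha_def]
    linarith [hq']
  -- final assembly
  have htpow : t ^ ((k:ℝ) - (j:ℝ)) = (t^m)⁻¹ := by
    have : ((k:ℝ) - (j:ℝ)) = -(m:ℝ) := by rw [hmjk]; push_cast; ring
    rw [this, Real.rpow_neg ht.le, Real.rpow_natCast]
  have hsplit : Real.exp (-(ν * r^2 / 2) * t) =
      Real.exp (-a) * Real.exp (-(2*a)) * Real.exp (-(ν/8) * r^2 * t) := by
    rw [← Real.exp_add, ← Real.exp_add, ha_def]
    ring_nf
  have hpowj : (ν * r^2) ^ j * ((r^2)^k)⁻¹ = ν^j * (r^2)^m := by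
    have hne : ((r^2:ℝ))^k ≠ 0 := (pow_pos hrpos k).ne'
    rw [hmjk]
    calc (ν * r^2) ^ (k+m) * ((r^2)^k)⁻¹
        = ν^(k+m) * (r^2)^m * ((r^2)^k * ((r^2)^k)⁻¹) := by rw [mul_pow, pow_add]; ring
      _ = ν^(k+m) * (r^2)^m := by rw [mul_inv_cancel₀ hne, mul_one]
  rw [htpow, hsplit]
  calc (ν * r^2) ^ j * (Real.exp (-a) * Real.exp (-(2*a)) * Real.exp (-(ν/8) * r^2 * t)) * ((r^2)^k)⁻¹
      = (ν^j * ((r^2)^m * Real.exp (-a))) * (Real.exp (-(2*a)) * Real.exp (-(ν/8) * r^2 * t)) := by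
        rw [show (ν * r^2) ^ j * (Real.exp (-a) * Real.exp (-(2*a)) * Real.exp (-(ν/8) * r^2 * t)) * ((r^2)^k)⁻¹
          = ((ν * r^2) ^ j * ((r^2)^k)⁻¹) * Real.exp (-a) * (Real.exp (-(2*a)) * Real.exp (-(ν/8) * r^2 * t)) by ring, hpowj]
        ring
    _ ≤ (ν^j * ((8/ν)^m * (t^m)⁻¹ * m.factorial)) * (Real.exp (-(β^2/ν) * t) * Real.exp (-(ν/8) * r^2 * t)) := by
        have hA : ν^j * ((r^2)^m * Real.exp (-a)) ≤ ν^j * ((8/ν)^m * (t^m)⁻¹ * m.factorial) :=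
          mul_le_mul_of_nonneg_left hr2m (by positivity)
        have hB : Real.exp (-(2*a)) * Real.exp (-(ν/8) * r^2 * t) ≤
            Real.exp (-(β^2/ν) * t) * Real.exp (-(ν/8) * r^2 * t) :=
          mul_le_mul_of_nonneg_right hexp2 (Real.exp_pos _).le
        exact mul_le_mul hA hB (by positivity) (by positivity)
    _ = ν^j * (8/ν)^m * m.factorial * (t^m)⁻¹ * Real.exp (-(β^2/ν) * t - ν/8 * r^2 * t) := by
        rw [← Real.exp_add]; ring_nf
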